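/- Let n be a positive integer and p a prime number with √(n+1) < p ≤ n + 1. Then the p-adic valuation of the integer σ_n/n! is 0 or 1, and it equals 1 if and only if there exists a positive integer k with k < √(n+1) + 1 such that p = ⌊n/k + 1⌋. -/

import Mathlib

open Nat

/-- `σ n := ∏_{p prime} p ^ ⌊n / (p - 1)⌋` (only finitely many primes, those with
`p ≤ n + 1`, have a nonzero exponent; `n / (p - 1)` is natural division).
Since `n! ∣ σ n`, the quotient `σ n / n!` (natural division) is exact. -/
noncomputable def sigma' (n : ℕ) : ℕ := ∏ᶠ p ∈ {p : ℕ | p.Prime}, p ^ (n / (p - 1))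

lemma sigma'_eq (n : ℕ) :
    sigma' n = ∏ q ∈ (Finset.range (n+2)).filter Nat.Prime, q ^ (n / (q-1)) := by
  apply finprod_mem_eq_prod_of_inter_mulSupport_eq
  ext q
  simp only [Set.mem_inter_iff, Set.mem_setOf_eq, Function.mem_mulSupport, Finset.coe_filter,
    Finset.mem_range]
  constructor
  · rintro ⟨hq, hne⟩
    refine ⟨⟨?_, hq⟩, hne⟩
    by_contra h
    push_neg at h
    apply hne
    have : n / (q-1) = 0 := Nat.div_eq_of_lt (by omega)
    simp [this]
  · rintro ⟨⟨_, hq⟩, hne⟩; exact ⟨hq, hne⟩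

lemma sigma'_ne_zero (n : ℕ) : sigma' n ≠ 0 := by
  rw [sigma'_eq]
  exact Finset.prod_ne_zero_iff.mpr fun q hq =>
    pow_ne_zero _ (Finset.mem_filter.mp hq).2.pos.ne'

lemma factorization_sigma' (n q : ℕ) (hq : q.Prime) :
    (sigma' n).factorization q = n / (q - 1) := by
  rw [sigma'_eq, Nat.factorization_prod (fun x hx =>
    pow_ne_zero _ (Finset.mem_filter.mp hx).2.pos.ne')]
  rw [Finset.sum_apply']
  by_cases hqmem : q ∈ (Finset.range (n+2)).filter Nat.Prime
  · rw [Finset.sum_eq_single q]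
    · rw [hq.factorization_pow, Finsupp.single_eq_same]
    · intro b hb hbq
      rw [(Finset.mem_filter.mp hb).2.factorization_pow, Finsupp.single_eq_of_ne' hbq]
    · intro h; exact absurd hqmem h
  · have h1 : n / (q - 1) = 0 := by
      apply Nat.div_eq_of_lt
      have : ¬ q < n + 2 := fun h => hqmem (Finset.mem_filter.mpr ⟨Finset.mem_range.mpr h, hq⟩)
      omega
    rw [h1]
    apply Finset.sum_eq_zero
    intro b hb
    have hbq : b ≠ q := fun h => hqmem (h ▸ hb)
    rw [(Finset.mem_filter.mp hb).2.factorization_pow, Finsupp.single_eq_of_ne' hbq]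

lemma factorial_dvd_sigma' (n : ℕ) : n ! ∣ sigma' n := by
  rw [← Nat.factorization_le_iff_dvd (Nat.factorial_ne_zero n) (sigma'_ne_zero n)]
  intro q
  by_cases hq : q.Prime
  · rw [factorization_sigma' n q hq, Nat.factorization_def _ hq]
    have : Fact q.Prime := ⟨hq⟩
    have hq2 := hq.two_le
    rw [Nat.le_div_iff_mul_le (by omega : 0 < q - 1), mul_comm]
    calc (q - 1) * padicValNat q (n !) = n - (q.digits n).sum :=
          sub_one_mul_padicValNat_factorial n
      _ ≤ n := Nat.sub_le _ _
  · simp [Nat.factorization_eq_zero_of_not_prime _ hq]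

/-- The pure arithmetic core. -/
lemma key_le (n p : ℕ) (hp : 2 ≤ p) (hlt : n + 1 < p ^ 2) :
    n / (p - 1) ≤ n / p + 1 := by
  have hm : n / p ≤ p - 1 := by
    have : n / p < p := Nat.div_lt_of_lt_mul (by nlinarith [Nat.sub_le p 1])
    omega
  have hr : n % p ≤ p - 1 := by have := Nat.mod_lt n (show 0 < p by omega); omega
  have hdecomp : n = (p - 1) * (n / p) + (n / p + n % p) := by
    have := Nat.div_add_mod n p
    have : p * (n / p) + n % p = n := this
    nlinarith [Nat.sub_add_cancel (show 1 ≤ p by omega)]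
  have hsum : n / p + n % p < 2 * (p - 1) := by
    by_contra h
    push_neg at h
    have h1 : n / p = p - 1 := by omega
    have h2 : n % p = p - 1 := by omega
    have := Nat.div_add_mod n p
    nlinarith [Nat.sub_add_cancel (show 1 ≤ p by omega), Nat.pow_two p ▸ hlt]
  calc n / (p - 1) = ((p - 1) * (n / p) + (n / p + n % p)) / (p - 1) := by rw [← hdecomp]
    _ = n / p + (n / p + n % p) / (p - 1) := by
        rw [Nat.mul_add_div (by omega : 0 < p - 1)]
    _ ≤ n / p + 1 := by
        have : (n / p + n % p) / (p - 1) < 2 := by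
          rw [Nat.div_lt_iff_lt_mul (by omega : 0 < p - 1)]; omega
        omega

lemma key_forward (n p : ℕ) (hp : 2 ≤ p) (hlt : n + 1 < p ^ 2)
    (h : n / (p - 1) = n / p + 1) : n / (n / p + 1) = p - 1 := by
  set k := n / p + 1 with hk
  have h1 : k * (p - 1) ≤ n := (Nat.le_div_iff_mul_le (by omega : 0 < p - 1)).mp h.ge
  have h2 : n < k * p :=
    (Nat.div_lt_iff_lt_mul (show 0 < p by omega)).mp (Nat.lt_succ_self _)
  refine Nat.div_eq_of_lt_le (by rw [mul_comm]; exact h1) ?_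
  have hsucc : p - 1 + 1 = p := by omega
  rw [hsucc, mul_comm]
  exact h2

lemma key_backward (n p : ℕ) (hp : 2 ≤ p) (hlt : n + 1 < p ^ 2)
    (k : ℕ) (hk : 0 < k) (hnk : n / k = p - 1) : n / (p - 1) = n / p + 1 := by
  have h1 : k * (p - 1) ≤ n := by
    rw [mul_comm]
    exact (Nat.le_div_iff_mul_le hk).mp (le_of_eq hnk.symm)
  have h2 : n < k * p := by
    rw [mul_comm]
    exact (Nat.div_lt_iff_lt_mul hk).mp (by omega)
  have hle : k ≤ n / (p - 1) := (Nat.le_div_iff_mul_le (by omega : 0 < p - 1)).mpr h1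
  have hlt2 : n / p < k := (Nat.div_lt_iff_lt_mul (by omega : 0 < p)).mpr h2
  have := key_le n p hp hlt
  omega

/-- **Theorem 2.** Let `n` be a positive integer and `p` a prime with
`√(n+1) < p ≤ n + 1`. Then the `p`-adic valuation of `σ n / n!` is `0` or `1`, and it
equals `1` if and only if `p = ⌊n / k + 1⌋` for some positive integer `k` with
`k < √(n+1) + 1` (here `⌊n / k + 1⌋ = n / k + 1` with natural division). -/
theorem padicValNat_sigma_div_factorial (n : ℕ) (hn : 0 < n) (p : ℕ) (hp : p.Prime)
    (h1 : Real.sqrt (n + 1) < p) (h2 : p ≤ n + 1) :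
    (padicValNat p (sigma' n / n !) = 0 ∨ padicValNat p (sigma' n / n !) = 1) ∧
      (padicValNat p (sigma' n / n !) = 1 ↔
        ∃ k : ℕ, 0 < k ∧ (k : ℝ) < Real.sqrt (n + 1) + 1 ∧ p = n / k + 1) := by
  have : Fact p.Prime := ⟨hp⟩
  have hp2 : 2 ≤ p := hp.two_le
  have hlt : n + 1 < p ^ 2 := by
    have := (Real.sqrt_lt' (by exact_mod_cast hp.pos : (0:ℝ) < p)).mp h1
    exact_mod_cast this
  -- valuation of n! is n / p
  have hlog : Nat.log p n < 2 := by
    by_contra h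
    push_neg at h
    have := Nat.pow_log_le_self p hn.ne'
    have h2' : p ^ 2 ≤ p ^ Nat.log p n := Nat.pow_le_pow_right hp.pos h
    omega
  have hfact : padicValNat p (n !) = n / p := by
    rw [padicValNat_factorial hlog]
    simp
  have hval : padicValNat p (sigma' n / n !) = n / (p - 1) - n / p := by
    rw [padicValNat.div_of_dvd (factorial_dvd_sigma' n), hfact,
      ← Nat.factorization_def _ hp, factorization_sigma' n p hp]
  have hle := key_le n p hp2 hlt
  constructor
  · rw [hval]; omega
  · rw [hval]
    constructor
    · intro h
      have heq : n / (p - 1) = n / p + 1 := by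
        have : n / p ≤ n / (p - 1) := Nat.div_le_div_left (by omega) (by omega)
        omega
      refine ⟨n / p + 1, by omega, ?_, ?_⟩
      · have hcast : ((n / p : ℕ) : ℝ) < Real.sqrt (n + 1) := by
          have hple : ((n / p : ℕ) : ℝ) ≤ (n : ℝ) / p := Nat.cast_div_le
          have hsq : (0:ℝ) < Real.sqrt (n + 1) := Real.sqrt_pos.mpr (by positivity)
          have : (n : ℝ) / p < Real.sqrt (n + 1) := by
            rw [div_lt_iff₀ (by exact_mod_cast hp.pos : (0:ℝ) < p)]
            calc (n : ℝ) < (n : ℝ) + 1 := by linarith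
              _ = Real.sqrt (n+1) * Real.sqrt (n+1) := by
                  rw [Real.mul_self_sqrt (by positivity)]
              _ < Real.sqrt (n+1) * p := by
                  exact mul_lt_mul_of_pos_left h1 hsq
          linarith
        push_cast
        linarith
      · have := key_forward n p hp2 hlt heq
        omega
    · rintro ⟨k, hk0, _, hkp⟩
      have hnk : n / k = p - 1 := by omega
      have := key_backward n p hp2 hlt k hk0 hnk
      have : n / p ≤ n / (p - 1) := Nat.div_le_div_left (by omega) (by omega)
      omega
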